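/- Let A and B be two-outcome observables on a complex Hilbert space H (i.e., A(0), A(1), B(0), B(1) are effects with A(0)+A(1) = I and B(0)+B(1) = I). Suppose A and B have exactly one joint observable G. Then G is a maximal joint observable: for each i, j ∈ {0,1}, the effect G(i,j) is a maximal element of lb(A(i), B(j)). -/
import Mathlib


noncomputable section

variable {H : Type*} [NormedAddCommGroup H] [InnerProductSpace ℂ H] [CompleteSpace H]

/-- An operator is an effect if `0 ≤ E ≤ I` in the Loewner order. -/
def IsEffect (E : H →L[ℂ] H) : Prop := E.IsPositive ∧ ((1 : H →L[ℂ] H) - E).IsPositive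

/-- The Loewner order: `A ≤ B` iff `B - A` is positive. -/
def loewnerLE (A B : H →L[ℂ] H) : Prop := (B - A).IsPositive

/-- `G` is a joint observable of the two-outcome observables `A` and `B`. -/
def IsJointObs (G : Fin 2 → Fin 2 → (H →L[ℂ] H)) (A B : Fin 2 → (H →L[ℂ] H)) : Prop :=
  (∀ i j, (G i j).IsPositive) ∧ (∑ i, ∑ j, G i j) = 1 ∧
    (∀ i, (∑ j, G i j) = A i) ∧ (∀ j, (∑ i, G i j) = B j)

/-- `C` is a maximal element of `lb(A,B)`. -/
def IsMaximalLB (C A B : H →L[ℂ] H) : Prop :=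
  (IsEffect C ∧ loewnerLE C A ∧ loewnerLE C B) ∧
    ¬ ∃ D : H →L[ℂ] H, (IsEffect D ∧ loewnerLE D A ∧ loewnerLE D B) ∧ loewnerLE C D ∧ C ≠ D

lemma fin2_sum {M : Type*} [AddCommMonoid M] (f : Fin 2 → M) (i : Fin 2) :
    ∑ k, f k = f i + f (i + 1) := by
  fin_cases i <;> simp [Fin.sum_univ_two] <;> exact add_comm _ _

lemma fin2_other {k i : Fin 2} (h : k ≠ i) : k = i + 1 := by
  fin_cases k <;> fin_cases i <;> simp_all

lemma fin2_succ_ne (i : Fin 2) : i + 1 ≠ i := by fin_cases i <;> decide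

/-- if two-outcome observables `A` and `B` have exactly one joint observable
`G`, then `G` is a maximal joint observable. -/
theorem unique_joint_observable_is_maximal
    (A B : Fin 2 → (H →L[ℂ] H))
    (hA : ∀ i, IsEffect (A i)) (hAsum : A 0 + A 1 = 1)
    (hB : ∀ j, IsEffect (B j)) (hBsum : B 0 + B 1 = 1)
    (G : Fin 2 → Fin 2 → (H →L[ℂ] H)) (hG : IsJointObs G A B)
    (huniq : ∀ G' : Fin 2 → Fin 2 → (H →L[ℂ] H), IsJointObs G' A B → G' = G) :
    ∀ i j, IsMaximalLB (G i j) (A i) (B j) := by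
  intro i j
  obtain ⟨hpos, htot, hrow, hcol⟩ := hG
  -- basic identities
  have hA1 : A i + A (i + 1) = 1 := by
    fin_cases i
    · exact hAsum
    · rw [add_comm]; exact hAsum
  have hB1 : B j + B (j + 1) = 1 := by
    fin_cases j
    · exact hBsum
    · rw [add_comm]; exact hBsum
  have hrow' : G i j + G i (j + 1) = A i := by
    have := hrow i; rwa [fin2_sum _ j] at this
  have hcol' : G i j + G (i + 1) j = B j := by
    have := hcol j; rwa [fin2_sum _ i] at this
  have hcol'' : G i (j + 1) + G (i + 1) (j + 1) = B (j + 1) := by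
    have := hcol (j + 1); rwa [fin2_sum _ i] at this
  have hGi1 : G i (j + 1) = A i - G i j := by
    rw [← hrow']; module
  have hG1j : G (i + 1) j = B j - G i j := by
    rw [← hcol']; module
  have hG11 : G (i + 1) (j + 1) = 1 - A i - B j + G i j := by
    have hBj1 : B (j + 1) = 1 - B j := by rw [← hB1]; module
    have := hcol''
    rw [hGi1, hBj1] at this
    have : G (i + 1) (j + 1) = (1 - B j) - (A i - G i j) := by
      rw [← this]; module
    rw [this]; module
  constructor
  · -- G i j is in lb(A i, B j)
    refine ⟨⟨hpos i j, ?_⟩, ?_, ?_⟩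
    · have h1 : (1 : H →L[ℂ] H) - G i j = (A i - G i j) + A (i + 1) := by
        rw [← hA1]; module
      rw [h1, ← hGi1]
      exact (hpos i (j + 1)).add (hA (i + 1)).1
    · show (A i - G i j).IsPositive
      rw [← hGi1]; exact hpos i (j + 1)
    · show (B j - G i j).IsPositive
      rw [← hG1j]; exact hpos (i + 1) j
  · -- maximality
    rintro ⟨D, ⟨hDeff, hDA, hDB⟩, hGD, hne⟩
    -- build a new joint observable G'
    set G' : Fin 2 → Fin 2 → (H →L[ℂ] H) := fun k l =>
      if k = i then (if l = j then D else A i - D)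
      else (if l = j then B j - D else 1 - A i - B j + D) with hG'def
    have key : ∀ k l, G' k l =
        if k = i then (if l = j then D else A i - D)
        else (if l = j then B j - D else 1 - A i - B j + D) := fun k l => rfl
    have hrowG' : ∀ k, (∑ l, G' k l) = A k := by
      intro k
      rw [fin2_sum _ j]
      by_cases hk : k = i
      · subst hk
        simp only [key, fin2_succ_ne j, eq_self_iff_true, if_true, if_false]
        module
      · have hk1 : k = i + 1 := fin2_other hk
        subst hk1
        simp only [key, hk, fin2_succ_ne j, eq_self_iff_true, if_true, if_false]
        have : A (i + 1) = 1 - A i := by rw [← hA1]; module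
        rw [this]; module
    have hcolG' : ∀ l, (∑ k, G' k l) = B l := by
      intro l
      rw [fin2_sum _ i]
      by_cases hl : l = j
      · subst hl
        simp only [key, fin2_succ_ne i, eq_self_iff_true, if_true, if_false]
        module
      · have hl1 : l = j + 1 := fin2_other hl
        subst hl1
        simp only [key, fin2_succ_ne i, fin2_succ_ne j, eq_self_iff_true, if_true, if_false]
        have : B (j + 1) = 1 - B j := by rw [← hB1]; module
        rw [this]; module
    have hposG' : ∀ k l, (G' k l).IsPositive := by
      intro k l
      rw [key]
      by_cases hk : k = i <;> by_cases hl : l = j <;>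
        simp only [if_pos, if_neg, hk, hl, if_true, if_false]
      · exact hDeff.1
      · exact hDA
      · exact hDB
      · have heq : (1 : H →L[ℂ] H) - A i - B j + D
            = G (i + 1) (j + 1) + (D - G i j) := by
          rw [hG11]; module
        rw [heq]
        exact (hpos (i + 1) (j + 1)).add hGD
    have htotG' : (∑ k, ∑ l, G' k l) = 1 := by
      have : (∑ k, ∑ l, G' k l) = ∑ k, A k :=
        Finset.sum_congr rfl (fun k _ => hrowG' k)
      rw [this, Fin.sum_univ_two, hAsum]
    have hGG' : G' = G := huniq G' ⟨hposG', htotG', hrowG', hcolG'⟩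
    apply hne
    have : G' i j = D := by rw [key, if_pos rfl, if_pos rfl]
    rw [← this, hGG']
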